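/- (Property 3) Let n ≥ 1, let n₁ be an integer with 1 ≤ n₁ ≤ n, set n₂ = n − n₁ and β = n/n₁, and let σ₁, …, σₙ be positive reals and b₁, …, bₙ reals. Define G(ρ) = (Σᵢ₌₁ⁿ σᵢ²bᵢ²/(σᵢ²+ρ)²)·(Σⱼ₌₁^{n₁} (βσⱼ²+ρ)/(σⱼ²+ρ)²) + (n₂/ρ)·(Σᵢ₌₁ⁿ σᵢ²bᵢ²/(σᵢ²+ρ)²) − (Σᵢ₌₁ⁿ bᵢ²/(σᵢ²+ρ)²)·(Σⱼ₌₁^{n₁} σⱼ²(βσⱼ²+ρ)/(σⱼ²+ρ)²). If n₂ ≥ 1 and at least one bᵢ ≠ 0, then G(ρ) tends to +∞ as ρ tends to 0 from the right. -/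

import Mathlib

/-- The COPRA characteristic function `G(ρ)`. -/
noncomputable def copraG (n n₁ : ℕ) (σ b : ℕ → ℝ) (ρ : ℝ) : ℝ :=
  (∑ i ∈ Finset.range n, σ i ^ 2 * b i ^ 2 / (σ i ^ 2 + ρ) ^ 2) *
      (∑ j ∈ Finset.range n₁,
        (((n : ℝ) / n₁) * σ j ^ 2 + ρ) / (σ j ^ 2 + ρ) ^ 2)
    + (((n - n₁ : ℕ) : ℝ) / ρ) *
        (∑ i ∈ Finset.range n, σ i ^ 2 * b i ^ 2 / (σ i ^ 2 + ρ) ^ 2)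
    - (∑ i ∈ Finset.range n, b i ^ 2 / (σ i ^ 2 + ρ) ^ 2) *
        (∑ j ∈ Finset.range n₁,
          σ j ^ 2 * (((n : ℝ) / n₁) * σ j ^ 2 + ρ) / (σ j ^ 2 + ρ) ^ 2)

/-- (Property 3) If `n₂ = n − n₁ ≥ 1` and some `bᵢ ≠ 0`, the COPRA characteristic function
`G(ρ)` tends to `+∞` as `ρ → 0⁺`. -/
theorem stmt_9 (n n₁ : ℕ) (hn₁ : 1 ≤ n₁) (hn₁n : n₁ ≤ n)
    (σ b : ℕ → ℝ) (hσ : ∀ i < n, 0 < σ i)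
    (hn₂ : 1 ≤ n - n₁) (hb : ∃ i < n, b i ≠ 0) :
    Filter.Tendsto (copraG n n₁ σ b) (nhdsWithin 0 (Set.Ioi 0)) Filter.atTop := by
  set A : ℝ → ℝ := fun ρ => ∑ i ∈ Finset.range n, σ i ^ 2 * b i ^ 2 / (σ i ^ 2 + ρ) ^ 2 with hA
  set B : ℝ → ℝ := fun ρ => ∑ j ∈ Finset.range n₁,
      (((n : ℝ) / n₁) * σ j ^ 2 + ρ) / (σ j ^ 2 + ρ) ^ 2 with hB
  set C : ℝ → ℝ := fun ρ => ∑ i ∈ Finset.range n, b i ^ 2 / (σ i ^ 2 + ρ) ^ 2 with hC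
  set D : ℝ → ℝ := fun ρ => ∑ j ∈ Finset.range n₁,
      σ j ^ 2 * (((n : ℝ) / n₁) * σ j ^ 2 + ρ) / (σ j ^ 2 + ρ) ^ 2 with hD
  have hden : ∀ i < n, ((σ i ^ 2 + (0:ℝ)) ^ 2) ≠ 0 := by
    intro i hi
    have := hσ i hi
    positivity
  have hcontA : ContinuousAt A 0 := by
    refine tendsto_finset_sum _ fun i hi => ?_
    exact (continuousAt_const.div (by fun_prop) (hden i (Finset.mem_range.mp hi)))
  have hcontB : ContinuousAt B 0 := by
    refine tendsto_finset_sum _ fun j hj => ?_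
    exact ((continuousAt_const.add continuousAt_id).div (by fun_prop)
      (hden j (lt_of_lt_of_le (Finset.mem_range.mp hj) hn₁n)))
  have hcontC : ContinuousAt C 0 := by
    refine tendsto_finset_sum _ fun i hi => ?_
    exact (continuousAt_const.div (by fun_prop) (hden i (Finset.mem_range.mp hi)))
  have hcontD : ContinuousAt D 0 := by
    refine tendsto_finset_sum _ fun j hj => ?_
    exact ((continuousAt_const.mul (continuousAt_const.add continuousAt_id)).div (by fun_prop)
      (hden j (lt_of_lt_of_le (Finset.mem_range.mp hj) hn₁n)))
  -- A 0 > 0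
  have hA0 : 0 < A 0 := by
    obtain ⟨i₀, hi₀n, hbi₀⟩ := hb
    apply Finset.sum_pos'
    · intro i hi
      positivity
    · refine ⟨i₀, Finset.mem_range.mpr hi₀n, ?_⟩
      have hσ₀ := hσ i₀ hi₀n
      positivity
  -- the divergent part
  have hdiv : Filter.Tendsto (fun ρ => (((n - n₁ : ℕ) : ℝ) / ρ) * A ρ)
      (nhdsWithin 0 (Set.Ioi 0)) Filter.atTop := by
    have h1 : Filter.Tendsto (fun ρ : ℝ => ((n - n₁ : ℕ) : ℝ) / ρ)
        (nhdsWithin 0 (Set.Ioi 0)) Filter.atTop := by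
      have hc : (0:ℝ) < ((n - n₁ : ℕ) : ℝ) := by exact_mod_cast hn₂
      simpa [div_eq_mul_inv] using (tendsto_inv_nhdsGT_zero.const_mul_atTop hc)
    exact h1.atTop_mul_pos hA0
      ((hcontA.tendsto).mono_left nhdsWithin_le_nhds)
  -- the bounded part
  have hfin : Filter.Tendsto (fun ρ => A ρ * B ρ - C ρ * D ρ)
      (nhdsWithin 0 (Set.Ioi 0)) (nhds (A 0 * B 0 - C 0 * D 0)) := by
    exact (((hcontA.mul hcontB).sub (hcontC.mul hcontD)).tendsto).mono_left nhdsWithin_le_nhds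
  have heq : copraG n n₁ σ b = fun ρ =>
      (A ρ * B ρ - C ρ * D ρ) + (((n - n₁ : ℕ) : ℝ) / ρ) * A ρ := by
    funext ρ
    simp only [copraG, hA, hB, hC, hD]
    ring
  rw [heq]
  exact hfin.add_atTop hdiv
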